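/- Let λ > 0 and f ∈ C⁰[a,b]. Suppose P = [a = t₀ < t₁ < ⋯ < t_k < t_{k+1} = b] is a partition of [a,b] such that Φ_{[a,b],λ,P}(f) = Φ_{[a,b],λ}(f) and |P| is maximal among all partitions attaining this value. If [t_{j−1},t_j] is an uptick (resp. downtick), then [t_{j−1},t_j] contains no λ-downtick (resp. no λ-uptick); that is, if [t_{j−1},t_j] is an uptick then there are no x ≤ y in [t_{j−1},t_j] with f(y) ≤ f(x) − λ. -/

import Mathlib

open scoped BigOperators ENNReal
open MeasureTheory Set Filter

/-- A partition `a = t₀ < t₁ < ⋯ < t_k < t_{k+1} = b` of `[a,b]` with `k` interior points. -/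
structure RTVPartition (a b : ℝ) where
  k : ℕ
  t : ℕ → ℝ
  ht0 : t 0 = a
  htlast : t (k + 1) = b
  hmono : ∀ i, i ≤ k → t i < t (i + 1)

/-- `Φ_{[a,b],λ,P}(f) = ∑_{i=1}^{k+1} |f(t_i) − f(t_{i−1})| − λ·|P|`. -/
noncomputable def phiP (lam a b : ℝ) (f : ℝ → ℝ) (P : RTVPartition a b) : ℝ :=
  (∑ i ∈ Finset.range (P.k + 1), |f (P.t (i + 1)) - f (P.t i)|) - lam * P.k

/-- The regularized total variation `Φ_{[a,b],λ}(f) = sup_P Φ_{[a,b],λ,P}(f)`. -/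
noncomputable def phiRTV (lam a b : ℝ) (f : ℝ → ℝ) : ℝ :=
  ⨆ P : RTVPartition a b, phiP lam a b f P

lemma RTVPartition.t_mono {a b : ℝ} (P : RTVPartition a b) {i j : ℕ} (hij : i ≤ j)
    (hj : j ≤ P.k + 1) : P.t i ≤ P.t j := by
  induction j with
  | zero => simp_all
  | succ n ih =>
    rcases Nat.lt_or_ge i (n+1) with h | h
    · have : P.t i ≤ P.t n := ih (by omega) (by omega)
      have := P.hmono n (by omega)
      linarith
    · have : i = n + 1 := by omega
      simp [this]

lemma RTVPartition.t_mem {a b : ℝ} (P : RTVPartition a b) {i : ℕ} (hi : i ≤ P.k + 1) :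
    P.t i ∈ Icc a b := by
  constructor
  · have h := P.t_mono (Nat.zero_le i) hi
    rw [P.ht0] at h; exact h
  · have h := P.t_mono hi le_rfl
    rw [P.htlast] at h; exact h

lemma exists_insert_partition (lam a b : ℝ) (f : ℝ → ℝ) (P : RTVPartition a b) (i : ℕ)
    (hi : i ≤ P.k) (c : ℝ) (h1 : P.t i < c) (h2 : c < P.t (i + 1)) :
    ∃ Q : RTVPartition a b, Q.k = P.k + 1 ∧ (∀ m, m ≤ i → Q.t m = P.t m) ∧ Q.t (i+1) = c ∧
      (∀ m, i + 2 ≤ m → Q.t m = P.t (m - 1)) ∧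
      phiP lam a b f Q = phiP lam a b f P +
        (|f c - f (P.t i)| + |f (P.t (i+1)) - f c| - |f (P.t (i+1)) - f (P.t i)| - lam) := by
  classical
  set k := P.k with hk
  set u : ℕ → ℝ := fun m => if m ≤ i then P.t m else if m = i + 1 then c else P.t (m - 1)
    with hu
  have hv1 : ∀ m, m ≤ i → u m = P.t m := by
    intro m hm; simp only [hu, if_pos hm]
  have hv2 : u (i+1) = c := by
    simp only [hu]; rw [if_neg (by omega : ¬ (i + 1 ≤ i))]; simp
  have hv3 : ∀ m, i + 2 ≤ m → u m = P.t (m - 1) := by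
    intro m hm; simp only [hu]; rw [if_neg (by omega), if_neg (by omega)]
  have humono : ∀ m, m ≤ k + 1 → u m < u (m + 1) := by
    intro m hm
    rcases Nat.lt_or_ge m i with h | h
    · rw [hv1 m (by omega), hv1 (m+1) (by omega)]
      exact P.hmono m (by omega)
    rcases Nat.eq_or_lt_of_le h with h' | h'
    · rw [hv1 m (by omega), ← h', hv2]; exact h1
    rcases Nat.eq_or_lt_of_le h' with h'' | h''
    · have e : m = i + 1 := by omega
      rw [e, hv2, hv3 (i+1+1) (by omega)]
      simpa using h2
    · rw [hv3 m (by omega), hv3 (m+1) (by omega)]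
      have e : m + 1 - 1 = m - 1 + 1 := by omega
      rw [e]
      exact P.hmono (m-1) (by omega)
  refine ⟨⟨k + 1, u, ?_, ?_, humono⟩, rfl, hv1, hv2, hv3, ?_⟩
  · rw [hv1 0 (by omega), P.ht0]
  · rw [hv3 (k+1+1) (by omega)]; simpa using P.htlast
  · simp only [phiP]
    set g : ℕ → ℝ := fun n => |f (P.t (n + 1)) - f (P.t n)| with hg
    set g' : ℕ → ℝ := fun n => |f (u (n + 1)) - f (u n)| with hg'
    have e1 : ∑ n ∈ Finset.range (k+1+1), g' n
        = ∑ n ∈ Finset.range i, g' n + ∑ n ∈ Finset.Ico i (k+2), g' n := by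
      rw [Finset.range_eq_Ico, Finset.range_eq_Ico, Finset.sum_Ico_consecutive g' (Nat.zero_le i) (by omega)]
    have e2 : ∑ n ∈ Finset.Ico i (k+2), g' n
        = g' i + (g' (i+1) + ∑ n ∈ Finset.Ico (i+2) (k+2), g' n) := by
      rw [Finset.sum_eq_sum_Ico_succ_bot (by omega) g',
        Finset.sum_eq_sum_Ico_succ_bot (by omega) g']
    have e3 : ∑ n ∈ Finset.Ico (i+2) (k+2), g' n = ∑ n ∈ Finset.Ico (i+1) (k+1), g n := by
      rw [Finset.sum_Ico_eq_sum_range, Finset.sum_Ico_eq_sum_range]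
      have hd : k + 2 - (i+2) = k + 1 - (i+1) := by omega
      rw [hd]
      apply Finset.sum_congr rfl
      intro l _
      simp only [hg, hg']
      rw [hv3 (i+2+l+1) (by omega), hv3 (i+2+l) (by omega)]
      have a1 : i+2+l+1-1 = i+1+l+1 := by omega
      have a2 : i+2+l-1 = i+1+l := by omega
      rw [a1, a2]
    have e4 : ∑ n ∈ Finset.range i, g' n = ∑ n ∈ Finset.range i, g n := by
      apply Finset.sum_congr rfl; intro n hn
      have hn' := Finset.mem_range.mp hn
      simp only [hg, hg']
      rw [hv1 n (by omega), hv1 (n+1) (by omega)]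
    have e5 : g' i = |f c - f (P.t i)| := by
      simp only [hg']; rw [hv2, hv1 i le_rfl]
    have e6 : g' (i+1) = |f (P.t (i+1)) - f c| := by
      simp only [hg']; rw [hv2, hv3 (i+1+1) (by omega)]
      norm_num
    have e7 : ∑ n ∈ Finset.range (k+1), g n
        = ∑ n ∈ Finset.range i, g n + (g i + ∑ n ∈ Finset.Ico (i+1) (k+1), g n) := by
      rw [Finset.range_eq_Ico, ← Finset.sum_Ico_consecutive g (Nat.zero_le i) (by omega : i ≤ k+1),
        Finset.sum_eq_sum_Ico_succ_bot (by omega : i < k+1) g, Finset.range_eq_Ico]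
    rw [e1, e2, e3, e4, e5, e6, e7]
    have hgik : g i = |f (P.t (i+1)) - f (P.t i)| := rfl
    rw [hgik]
    push_cast
    ring

lemma phiP_bddAbove (lam a b : ℝ) (hlam : 0 < lam) (f : ℝ → ℝ)
    (hf : ContinuousOn f (Icc a b)) :
    BddAbove (Set.range (fun Q : RTVPartition a b => phiP lam a b f Q)) := by
  classical
  obtain ⟨C, hC⟩ := isCompact_Icc.exists_bound_of_continuousOn hf
  set M := max C 0 with hM
  have hM0 : (0:ℝ) ≤ M := le_max_right _ _
  have hfb : ∀ x ∈ Icc a b, |f x| ≤ M := fun x hx => le_trans (hC x hx) (le_max_left _ _)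
  obtain ⟨δ, hδ, hδf⟩ := Metric.uniformContinuousOn_iff.mp
    (isCompact_Icc.uniformContinuousOn_of_continuous hf) lam hlam
  refine ⟨2*M*((b-a)/δ) + lam, ?_⟩
  rintro r ⟨Q, rfl⟩
  set k := Q.k with hk
  set S := (Finset.range (k+1)).filter (fun n => δ ≤ Q.t (n+1) - Q.t n) with hS
  set S' := (Finset.range (k+1)).filter (fun n => ¬ δ ≤ Q.t (n+1) - Q.t n) with hS'
  have hmem : ∀ n, n ≤ k + 1 → Q.t n ∈ Icc a b := fun n hn => Q.t_mem hn
  have htel : ∑ n ∈ Finset.range (k+1), (Q.t (n+1) - Q.t n) = b - a := by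
    rw [Finset.sum_range_sub, Q.htlast, Q.ht0]
  have hgap : ∀ n, n < k + 1 → 0 < Q.t (n+1) - Q.t n := by
    intro n hn; have := Q.hmono n (by omega); linarith
  have hcard : (S.card : ℝ) * δ ≤ b - a := by
    have h1 : S.card • δ ≤ ∑ n ∈ S, (Q.t (n+1) - Q.t n) :=
      Finset.card_nsmul_le_sum S _ δ (fun n hn => (Finset.mem_filter.mp hn).2)
    have h2 : ∑ n ∈ S, (Q.t (n+1) - Q.t n) ≤ ∑ n ∈ Finset.range (k+1), (Q.t (n+1) - Q.t n) :=
      Finset.sum_le_sum_of_subset_of_nonneg (Finset.filter_subset _ _)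
        (fun n hn _ => le_of_lt (hgap n (Finset.mem_range.mp hn)))
    rw [nsmul_eq_mul] at h1
    rw [htel] at h2
    linarith
  have hcard' : (S.card : ℝ) ≤ (b-a)/δ := (le_div_iff₀ hδ).mpr hcard
  have hb1 : ∑ n ∈ S, |f (Q.t (n+1)) - f (Q.t n)| ≤ 2*M*S.card := by
    have : ∀ n ∈ S, |f (Q.t (n+1)) - f (Q.t n)| ≤ 2*M := by
      intro n hn
      have hn' := Finset.mem_range.mp (Finset.mem_filter.mp hn).1
      have h1 := hfb _ (hmem (n+1) (by omega))
      have h2 := hfb _ (hmem n (by omega))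
      calc |f (Q.t (n+1)) - f (Q.t n)| ≤ |f (Q.t (n+1))| + |f (Q.t n)| := abs_sub _ _
        _ ≤ 2*M := by linarith
    calc ∑ n ∈ S, |f (Q.t (n+1)) - f (Q.t n)| ≤ ∑ n ∈ S, 2*M := Finset.sum_le_sum this
      _ = 2*M*S.card := by rw [Finset.sum_const, nsmul_eq_mul]; ring
  have hb2 : ∑ n ∈ S', |f (Q.t (n+1)) - f (Q.t n)| ≤ lam * (k+1) := by
    have : ∀ n ∈ S', |f (Q.t (n+1)) - f (Q.t n)| ≤ lam := by
      intro n hn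
      have hn' := Finset.mem_range.mp (Finset.mem_filter.mp hn).1
      have hlt : Q.t (n+1) - Q.t n < δ := by
        have := (Finset.mem_filter.mp hn).2; simp at this; linarith [this]
      have hd : dist (Q.t (n+1)) (Q.t n) < δ := by
        rw [Real.dist_eq, abs_of_pos (hgap n hn')]; exact hlt
      have := hδf _ (hmem (n+1) (by omega)) _ (hmem n (by omega)) hd
      rw [Real.dist_eq] at this
      linarith
    calc ∑ n ∈ S', |f (Q.t (n+1)) - f (Q.t n)| ≤ ∑ n ∈ S', lam := Finset.sum_le_sum this
      _ = lam * S'.card := by rw [Finset.sum_const, nsmul_eq_mul]; ring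
      _ ≤ lam * (k+1) := by
          have hc : S'.card ≤ k + 1 :=
            le_trans (Finset.card_filter_le _ _) (le_of_eq (Finset.card_range _))
          have : (S'.card : ℝ) ≤ ((k : ℝ) + 1) := by exact_mod_cast hc
          have := mul_le_mul_of_nonneg_left this (le_of_lt hlam)
          push_cast at this ⊢
          linarith
  have hsplit : ∑ n ∈ S, |f (Q.t (n+1)) - f (Q.t n)| + ∑ n ∈ S', |f (Q.t (n+1)) - f (Q.t n)|
      = ∑ n ∈ Finset.range (k+1), |f (Q.t (n+1)) - f (Q.t n)| :=
    Finset.sum_filter_add_sum_filter_not _ _ _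
  have h2MS : 2*M*(S.card:ℝ) ≤ 2*M*((b-a)/δ) :=
    mul_le_mul_of_nonneg_left hcard' (by linarith)
  simp only [phiP]
  rw [← hk, ← hsplit]
  push_cast
  linarith

lemma key_no_downtick (lam a b : ℝ) (hlam : 0 < lam) (f : ℝ → ℝ)
    (hf : ContinuousOn f (Icc a b)) (P : RTVPartition a b)
    (hopt : phiP lam a b f P = phiRTV lam a b f)
    (hmax : ∀ Q : RTVPartition a b, phiP lam a b f Q = phiRTV lam a b f → Q.k ≤ P.k)
    (i : ℕ) (hik : i ≤ P.k) (hup : f (P.t i) < f (P.t (i+1))) :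
    ¬∃ x y, x ∈ Icc (P.t i) (P.t (i+1)) ∧ y ∈ Icc (P.t i) (P.t (i+1)) ∧ x ≤ y ∧
      f y ≤ f x - lam := by
  rintro ⟨x, y, hx, hy, hxy, hdown⟩
  have hbdd := phiP_bddAbove lam a b hlam f hf
  have hle : ∀ Q : RTVPartition a b, phiP lam a b f Q ≤ phiRTV lam a b f :=
    fun Q => le_ciSup hbdd Q
  have hsub : Icc (P.t i) (P.t (i+1)) ⊆ Icc a b := by
    intro z hz
    have h1 := (P.t_mem (show i ≤ P.k + 1 by omega)).1
    have h2 := (P.t_mem (show i+1 ≤ P.k + 1 by omega)).2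
    exact ⟨le_trans h1 hz.1, le_trans hz.2 h2⟩
  have htiy : P.t i ≤ y := le_trans hx.1 hxy
  have hI1 : Icc (P.t i) y ⊆ Icc a b :=
    subset_trans (Icc_subset_Icc le_rfl hy.2) hsub
  obtain ⟨c, hcmem, hcmax⟩ := isCompact_Icc.exists_isMaxOn
    (Set.nonempty_Icc.mpr htiy) (hf.mono hI1)
  have hcmax' := isMaxOn_iff.mp hcmax
  have htic : P.t i ≤ c := hcmem.1
  have hcy : c ≤ y := hcmem.2
  have hfcx : f x ≤ f c := hcmax' x ⟨hx.1, hxy⟩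
  have hfct : f (P.t i) ≤ f c := hcmax' _ ⟨le_rfl, htiy⟩
  have hI2 : Icc c (P.t (i+1)) ⊆ Icc a b :=
    subset_trans (Icc_subset_Icc htic le_rfl) hsub
  obtain ⟨d, hdmem, hdmin⟩ := isCompact_Icc.exists_isMinOn
    (Set.nonempty_Icc.mpr (le_trans hcy hy.2)) (hf.mono hI2)
  have hdmin' := isMinOn_iff.mp hdmin
  have hcd : c ≤ d := hdmem.1
  have hdt1 : d ≤ P.t (i+1) := hdmem.2
  have hfdy : f d ≤ f y := hdmin' y ⟨hcy, hy.2⟩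
  have hfdt : f d ≤ f (P.t (i+1)) := hdmin' _ ⟨le_trans hcy hy.2, le_rfl⟩
  have hkey : f d ≤ f c - lam := by linarith
  have habs1 : f (P.t i) - f d ≤ |f d - f (P.t i)| := by
    rw [abs_sub_comm]; exact le_abs_self _
  have habs2 : f (P.t (i+1)) - f d ≤ |f (P.t (i+1)) - f d| := le_abs_self _
  have habs3 : |f (P.t (i+1)) - f (P.t i)| = f (P.t (i+1)) - f (P.t i) :=
    abs_of_pos (by linarith)
  have habs4 : f c - f (P.t i) ≤ |f c - f (P.t i)| := le_abs_self _
  have habs5 : f c - f (P.t (i+1)) ≤ |f (P.t (i+1)) - f c| := by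
    rw [abs_sub_comm]; exact le_abs_self _
  have habs6 : f c - f d ≤ |f d - f c| := by
    rw [abs_sub_comm]; exact le_abs_self _
  rcases eq_or_lt_of_le htic with hc | hc
  · rcases eq_or_lt_of_le hdt1 with hd | hd
    · -- c = t i, d = t(i+1): direct contradiction
      rw [← hd] at hup
      rw [← hc] at hkey
      linarith
    · -- insert d
      have hfc : f c = f (P.t i) := by rw [hc]
      have htd : P.t i < d := by
        rcases eq_or_lt_of_le (le_trans (le_of_eq hc) hcd) with h | h
        · exfalso; rw [← h] at hkey; linarith
        · exact h
      obtain ⟨Q, hQk, _, _, _, hQphi⟩ := exists_insert_partition lam a b f P i hik d htd hd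
      have hgt : phiRTV lam a b f < phiP lam a b f Q := by
        rw [hQphi, ← hopt]
        have : f d ≤ f (P.t i) - lam := by rw [← hfc]; exact hkey
        linarith
      linarith [hle Q]
  · rcases eq_or_lt_of_le hdt1 with hd | hd
    · -- d = t(i+1), insert c
      have hfd : f d = f (P.t (i+1)) := by rw [hd]
      have hct1 : c < P.t (i+1) := by
        rcases eq_or_lt_of_le (hd ▸ hcd) with h | h
        · exfalso; rw [h, hd] at hkey; linarith
        · exact h
      obtain ⟨Q, hQk, _, _, _, hQphi⟩ := exists_insert_partition lam a b f P i hik c hc hct1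
      have hgt : phiRTV lam a b f < phiP lam a b f Q := by
        rw [hQphi, ← hopt]
        have : f (P.t (i+1)) ≤ f c - lam := by rw [← hfd]; exact hkey
        linarith
      linarith [hle Q]
    · -- both interior: insert c then d
      have hcd' : c < d := by
        rcases eq_or_lt_of_le hcd with h | h
        · exfalso; rw [h] at hkey; linarith
        · exact h
      obtain ⟨Q1, hQ1k, hQ1a, hQ1b, hQ1c, hQ1phi⟩ :=
        exists_insert_partition lam a b f P i hik c hc (lt_trans hcd' hd)
      have hi1 : i + 1 ≤ Q1.k := by omega
      have e2 : Q1.t (i+1+1) = P.t (i+1) := by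
        rw [hQ1c (i+2) le_rfl]
        norm_num
      obtain ⟨Q2, hQ2k, _, _, _, hQ2phi⟩ :=
        exists_insert_partition lam a b f Q1 (i+1) hi1 d
          (by rw [hQ1b]; exact hcd') (by rw [e2]; exact hd)
      rw [hQ1b, e2] at hQ2phi
      have hphi : phiP lam a b f P ≤ phiP lam a b f Q2 := by
        rw [hQ2phi, hQ1phi]
        linarith
      have heq : phiP lam a b f Q2 = phiRTV lam a b f :=
        le_antisymm (hle Q2) (hopt ▸ hphi)
      have := hmax Q2 heq
      omega

/-- If `P` attains `Φ_{[a,b],λ}(f)` with `|P|` maximal among all partitions attaining it, and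
`[t_{j−1},t_j]` is an uptick (resp. downtick), then `[t_{j−1},t_j]` contains no `λ`-downtick
(resp. no `λ`-uptick): if `[t_{j−1},t_j]` is an uptick there are no `x ≤ y` in
`[t_{j−1},t_j]` with `f(y) ≤ f(x) − λ`, and symmetrically for a downtick. -/
theorem maximal_optimal_partition_no_wiggle (lam a b : ℝ) (hlam : 0 < lam) (f : ℝ → ℝ)
    (hf : ContinuousOn f (Icc a b)) (P : RTVPartition a b)
    (hopt : phiP lam a b f P = phiRTV lam a b f)
    (hmax : ∀ Q : RTVPartition a b, phiP lam a b f Q = phiRTV lam a b f → Q.k ≤ P.k)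
    (j : ℕ) (hj1 : 1 ≤ j) (hjk : j ≤ P.k + 1) :
    (f (P.t (j - 1)) < f (P.t j) →
      ¬∃ x y, x ∈ Icc (P.t (j - 1)) (P.t j) ∧ y ∈ Icc (P.t (j - 1)) (P.t j) ∧ x ≤ y ∧
        f y ≤ f x - lam) ∧
    (f (P.t j) < f (P.t (j - 1)) →
      ¬∃ x y, x ∈ Icc (P.t (j - 1)) (P.t j) ∧ y ∈ Icc (P.t (j - 1)) (P.t j) ∧ x ≤ y ∧
        f x + lam ≤ f y) := by
  obtain ⟨i, rfl⟩ : ∃ i, j = i + 1 := ⟨j - 1, by omega⟩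
  have hi : i + 1 - 1 = i := by omega
  rw [hi]
  have hik : i ≤ P.k := by omega
  have hphiPeq : ∀ Q : RTVPartition a b, phiP lam a b f Q = phiP lam a b (fun z => -f z) Q := by
    intro Q
    simp only [phiP]
    congr 1
    apply Finset.sum_congr rfl
    intro n _
    have : (-f (Q.t (n+1))) - (-f (Q.t n)) = -(f (Q.t (n+1)) - f (Q.t n)) := by ring
    rw [this, abs_neg]
  have hRTVeq : phiRTV lam a b f = phiRTV lam a b (fun z => -f z) := by
    simp only [phiRTV]
    exact iSup_congr hphiPeq
  constructor
  · intro hup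
    exact key_no_downtick lam a b hlam f hf P hopt hmax i hik hup
  · intro hdownt
    have hopt' : phiP lam a b (fun z => -f z) P = phiRTV lam a b (fun z => -f z) := by
      rw [← hphiPeq P, ← hRTVeq]; exact hopt
    have hmax' : ∀ Q : RTVPartition a b,
        phiP lam a b (fun z => -f z) Q = phiRTV lam a b (fun z => -f z) → Q.k ≤ P.k := by
      intro Q hQ
      exact hmax Q (by rw [hphiPeq Q, hRTVeq]; exact hQ)
    have hup' : (fun z => -f z) (P.t i) < (fun z => -f z) (P.t (i+1)) := by
      simp only []; linarith
    have hkey := key_no_downtick lam a b hlam (fun z => -f z) hf.neg P hopt' hmax' i hik hup'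
    rintro ⟨x, y, hx, hy, hxy, h⟩
    exact hkey ⟨x, y, hx, hy, hxy, by linarith⟩
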